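/- As ℤ_p-linear endomorphisms of B one has the commutation relation (Id + β·q·𝒟) ∘ ∇ ∘ ∂ = s₀·(∂ ∘ ∇) − 𝒟 ∘ ∇ + s₀·s₁·∇, where s₀ ∈ A acts by multiplication (and similarly s₀·s₁). Here s₀ := [k]_{q^{p^α}}·([k]_u)^{−1} is a unit of A, and s₁ ∈ A is the unique element with q·β·[k]_{q^{p^α}}·s₁ = [k]_{q^{p^α}} − [k]_u (equivalently, s₁ = −∂(d)/d). -/

import Mathlib

open Finset

/-- The q-analogue `[n]_t = ∑_{i=0}^{n-1} t^i`. -/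
def qan {A : Type*} [CommRing A] (t : A) (n : ℕ) : A := ∑ i ∈ Finset.range n, t ^ i

section qanlemmas
variable {A : Type*} [CommRing A] (t : A)

lemma qan_zero : qan t 0 = 0 := by simp [qan]

lemma qan_succ (n : ℕ) : qan t (n + 1) = qan t n + t ^ n := by
  simp [qan, Finset.sum_range_succ]

lemma qan_succ' (n : ℕ) : qan t (n + 1) = 1 + t * qan t n := by
  simp only [qan, Finset.sum_range_succ', pow_zero, pow_succ, Finset.mul_sum]
  rw [add_comm]
  congr 1
  exact Finset.sum_congr rfl fun i _ => by ring

lemma sub_one_mul_qan (n : ℕ) : (t - 1) * qan t n = t ^ n - 1 := by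
  induction n with
  | zero => simp [qan_zero]
  | succ n ih => rw [qan_succ, mul_add, ih]; ring

lemma one_add_sub_one_mul_qan (n : ℕ) : 1 + (t - 1) * qan t n = t ^ n := by
  rw [sub_one_mul_qan]; ring

lemma qan_add (x y : ℕ) : qan t (x + y) = qan t x + t ^ x * qan t y := by
  simp [qan, Finset.sum_range_add, Finset.mul_sum, pow_add]

lemma qan_mul (a b : ℕ) : qan t (a * b) = qan t a * qan (t ^ a) b := by
  induction b with
  | zero => simp [qan_zero]
  | succ b ih =>
      rw [Nat.mul_succ, qan_add, ih, qan_succ, mul_add, ← pow_mul]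
      ring
end qanlemmas

variable (p : ℕ) [Fact p.Prime] (α : ℕ)

/-- `A := ℤ_p⟦q−1⟧`; `q` is `1` plus the power series variable. -/
noncomputable def qA : PowerSeries ℤ_[p] := 1 + PowerSeries.X

/-- `β := q^{p^α} − 1 ∈ A`. -/
noncomputable def βA : PowerSeries ℤ_[p] := (qA p) ^ p ^ α - 1

/-- `d := [p]_{q^{p^α}} ∈ A`. -/
noncomputable def dA : PowerSeries ℤ_[p] := qan ((qA p) ^ p ^ α) p

/-- `u := q^{p^{α+1}} ∈ A`. -/
noncomputable def uA : PowerSeries ℤ_[p] := (qA p) ^ p ^ (α + 1)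

/-- The substitution `q ↦ q^{p^{α+1}+1}` on `A = ℤ_p⟦q−1⟧` (a `ℤ_p`-linear ring
endomorphism); the coefficient of `X^m` is given by the finite coefficientwise
substitution formula `X ↦ (1+X)^{p^{α+1}+1} − 1`, valid since the substituted series
has zero constant term. -/
noncomputable def substQ (f : PowerSeries ℤ_[p]) : PowerSeries ℤ_[p] :=
  PowerSeries.mk fun m =>
    ∑ n ∈ Finset.range (m + 1),
      PowerSeries.coeff n f *
        PowerSeries.coeff m (((qA p) ^ (p ^ (α + 1) + 1) - 1) ^ n)

/-- `γ₀ : B → B`, fixing `T` and acting on coefficients by `q ↦ q^{p^{α+1}+1}`. -/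
noncomputable def gamma0 (f : Polynomial (PowerSeries ℤ_[p])) :
    Polynomial (PowerSeries ℤ_[p]) :=
  ∑ n ∈ f.support, Polynomial.C (substQ p α (f.coeff n)) * Polynomial.X ^ n

/-- `∇ : B → B`, the `A`-linear map with `∇(T^m) = d·[m]_u·T^{m−1}`
(so `β·T·∇ = γ₁ − Id` for `γ₁` the `A`-algebra map `T ↦ u·T`). -/
noncomputable def nablaA (f : Polynomial (PowerSeries ℤ_[p])) :
    Polynomial (PowerSeries ℤ_[p]) :=
  ∑ n ∈ f.support,
    Polynomial.C (f.coeff n * dA p α * qan (uA p α) n) * Polynomial.X ^ (n - 1)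

/-- The coefficients `a_{k',j} ∈ A`: `a_{k',0} = 1`, `a_{1,1} = 1`, `a_{k',j} = 0` for
`j > k'`, and `a_{k'+1,j} = a_{k',j}·(1 + (u−1)·[j]_u) + a_{k',j−1}`. -/
noncomputable def aaA : ℕ → ℕ → PowerSeries ℤ_[p]
  | 0, 0 => 1
  | 0, _ + 1 => 0
  | _ + 1, 0 => 1
  | k' + 1, j + 1 =>
      aaA k' (j + 1) * (1 + (uA p α - 1) * qan (uA p α) (j + 1)) + aaA k' j

lemma aa_zero_right (K : ℕ) : aaA p α K 0 = 1 := by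
  cases K <;> rfl

lemma aa_pascal (K j : ℕ) :
    aaA p α (K + 1) (j + 1) =
      aaA p α K (j + 1) * (uA p α) ^ (j + 1) + aaA p α K j := by
  rw [show aaA p α (K+1) (j+1) = aaA p α K (j + 1) * (1 + (uA p α - 1) * qan (uA p α) (j + 1)) + aaA p α K j from rfl,
    one_add_sub_one_mul_qan]

lemma aa_one (K : ℕ) : aaA p α K 1 = qan (uA p α) K := by
  induction K with
  | zero => simp [aaA, qan_zero]
  | succ K ih =>
      rw [show (1:ℕ) = 0 + 1 from rfl, aa_pascal, ih, aa_zero_right, qan_succ',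
        pow_one, add_comm, mul_comm]

lemma aa_eq_zero {K j : ℕ} (h : K < j) : aaA p α K j = 0 := by
  induction K generalizing j with
  | zero => obtain ⟨j, rfl⟩ := Nat.exists_eq_add_of_lt h; simp [aaA, Nat.add_comm]
  | succ K ih =>
      obtain ⟨j, rfl⟩ : ∃ j', j = j' + 1 := ⟨j - 1, by omega⟩
      rw [aa_pascal, ih (by omega), ih (by omega), zero_mul, zero_add]

/-- `P m j = ∏_{i<j} (u^{m-i} - 1)` -/
noncomputable def PP (m j : ℕ) : PowerSeries ℤ_[p] :=
  ∏ i ∈ range j, ((uA p α) ^ (m - i) - 1)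

lemma PP_zero (m : ℕ) : PP p α m 0 = 1 := by simp [PP]

lemma PP_succ (m j : ℕ) : PP p α m (j + 1) = PP p α m j * ((uA p α) ^ (m - j) - 1) := by
  simp [PP, Finset.prod_range_succ]

lemma PP_eq_zero {m j : ℕ} (h : m < j) : PP p α m j = 0 := by
  apply Finset.prod_eq_zero (Finset.mem_range.mpr h)
  simp

lemma gauss_sum (K m : ℕ) :
    ∑ j ∈ range (K + 1), aaA p α K j * (uA p α) ^ (j.choose 2) * PP p α m j
      = (uA p α) ^ (K * m) := by
  induction K with
  | zero => simp [aa_zero_right, PP_zero]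
  | succ K ih =>
      rw [Finset.sum_range_succ']
      have e0 : aaA p α (K+1) 0 * (uA p α) ^ ((0:ℕ).choose 2) * PP p α m 0 = 1 := by
        simp [aa_zero_right, PP_zero]
      rw [e0]
      have hterm : ∀ j, aaA p α (K+1) (j+1) * (uA p α) ^ ((j+1).choose 2) * PP p α m (j+1)
          = (aaA p α K (j+1) * (uA p α) ^ ((j+1).choose 2 + (j+1)) * PP p α m (j+1))
            + aaA p α K j * (uA p α) ^ ((j+1).choose 2) * PP p α m (j+1) := by
        intro j
        rw [aa_pascal, pow_add]
        ring
      rw [Finset.sum_congr rfl (fun j _ => hterm j), Finset.sum_add_distrib]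
      have hshift : ∀ j, (j+1).choose 2 + (j+1) = (j+1).choose 2 + (j+1) := fun _ => rfl
      -- first sum: reassemble as ∑_{j ∈ range (K+2)} f j − f 0 where f j = aa K j u^{bj+j} P j
      have hchoose : ∀ j : ℕ, (j+1).choose 2 = j.choose 2 + j := by
        intro j
        rw [Nat.choose_succ_succ]
        simp [Nat.choose_one_right, Nat.add_comm]
      have hf1 : (∑ j ∈ range (K+1),
            aaA p α K (j+1) * (uA p α) ^ ((j+1).choose 2 + (j+1)) * PP p α m (j+1)) + 1
          = ∑ j ∈ range (K+2), aaA p α K j * (uA p α) ^ (j.choose 2 + j) * PP p α m j := by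
        rw [Finset.sum_range_succ' (fun j => aaA p α K j * (uA p α) ^ (j.choose 2 + j) * PP p α m j) (K+1)]
        simp [aa_zero_right, PP_zero]
      have hf2 : ∑ j ∈ range (K+2), aaA p α K j * (uA p α) ^ (j.choose 2 + j) * PP p α m j
          = ∑ j ∈ range (K+1), aaA p α K j * (uA p α) ^ (j.choose 2 + j) * PP p α m j := by
        rw [Finset.sum_range_succ, aa_eq_zero p α (by omega), zero_mul, zero_mul, add_zero]
      calc (∑ j ∈ range (K+1),
            aaA p α K (j+1) * (uA p α) ^ ((j+1).choose 2 + (j+1)) * PP p α m (j+1))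
          + (∑ j ∈ range (K+1),
            aaA p α K j * (uA p α) ^ ((j+1).choose 2) * PP p α m (j+1)) + 1
          = (∑ j ∈ range (K+1), aaA p α K j * (uA p α) ^ (j.choose 2 + j) * PP p α m j)
            + ∑ j ∈ range (K+1),
              aaA p α K j * (uA p α) ^ ((j+1).choose 2) * PP p α m (j+1) := by
            rw [add_right_comm, hf1, hf2]
        _ = ∑ j ∈ range (K+1),
              (uA p α) ^ m * (aaA p α K j * (uA p α) ^ (j.choose 2) * PP p α m j) := by
            rw [← Finset.sum_add_distrib]
            refine Finset.sum_congr rfl fun j _ => ?_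
            rw [hchoose j, PP_succ]
            by_cases hjm : j ≤ m
            · have : (uA p α) ^ (j.choose 2 + j) * ((uA p α) ^ (m - j) - 1)
                  = (uA p α) ^ (j.choose 2 + j) * (uA p α) ^ (m-j) - (uA p α) ^ (j.choose 2 + j) := by ring
              have hexp : j.choose 2 + j + (m - j) = j.choose 2 + m := by omega
              calc aaA p α K j * (uA p α) ^ (j.choose 2 + j) * PP p α m j
                    + aaA p α K j * (uA p α) ^ (j.choose 2 + j) * (PP p α m j * ((uA p α) ^ (m - j) - 1))
                  = aaA p α K j * (uA p α) ^ (j.choose 2 + j) * (uA p α) ^ (m - j) * PP p α m j := by ring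
                _ = (uA p α) ^ m * (aaA p α K j * (uA p α) ^ (j.choose 2) * PP p α m j) := by
                    rw [mul_assoc (aaA p α K j), ← pow_add, hexp, pow_add]; ring
            · rw [PP_eq_zero p α (by omega)]; ring
        _ = (uA p α) ^ ((K+1) * m) := by
            rw [← Finset.mul_sum, ih, ← pow_add]
            congr 1
            ring

/-- the series being substituted -/
noncomputable def DD : PowerSeries ℤ_[p] := (qA p) ^ (p ^ (α + 1) + 1) - 1

lemma constantCoeff_qA : PowerSeries.constantCoeff (qA p) = 1 := by
  simp [qA]

lemma constantCoeff_DD : PowerSeries.constantCoeff (DD p α) = 0 := by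
  simp [DD, constantCoeff_qA]

lemma DD_pow_coeff_zero {i n : ℕ} (h : i < n) :
    PowerSeries.coeff i ((DD p α) ^ n) = 0 := by
  have hdvd : (PowerSeries.X : PowerSeries ℤ_[p]) ^ n ∣ (DD p α) ^ n :=
    pow_dvd_pow_of_dvd (PowerSeries.X_dvd_iff.mpr (constantCoeff_DD p α)) n
  exact (PowerSeries.X_pow_dvd_iff.mp hdvd) i h

lemma substQ_coeff (f : PowerSeries ℤ_[p]) (m : ℕ) :
    PowerSeries.coeff m (substQ p α f)
      = ∑ n ∈ Finset.range (m + 1),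
          PowerSeries.coeff n f * PowerSeries.coeff m ((DD p α) ^ n) := by
  simp [substQ, DD, PowerSeries.coeff_mk]

lemma substQ_coeff' (f : PowerSeries ℤ_[p]) {m M : ℕ} (h : m < M) :
    PowerSeries.coeff m (substQ p α f)
      = ∑ n ∈ Finset.range M, PowerSeries.coeff n f * PowerSeries.coeff m ((DD p α) ^ n) := by
  rw [substQ_coeff]
  apply Finset.sum_subset (Finset.range_subset_range.mpr (by omega))
  intro n _ hn
  rw [DD_pow_coeff_zero p α (by simp at hn ⊢; omega), mul_zero]

lemma substQ_zero : substQ p α 0 = 0 := by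
  ext m
  rw [substQ_coeff]
  simp

lemma substQ_add (f g : PowerSeries ℤ_[p]) :
    substQ p α (f + g) = substQ p α f + substQ p α g := by
  ext m
  rw [map_add, substQ_coeff, substQ_coeff, substQ_coeff, ← Finset.sum_add_distrib]
  exact Finset.sum_congr rfl fun n _ => by rw [map_add]; ring

lemma substQ_one : substQ p α 1 = 1 := by
  ext m
  rw [substQ_coeff]
  rw [Finset.sum_eq_single 0]
  · simp
  · intro n _ hn
    simp [PowerSeries.coeff_one, hn]
  · simp

lemma substQ_mul (f g : PowerSeries ℤ_[p]) :
    substQ p α (f * g) = substQ p α f * substQ p α g := by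
  ext m
  rw [PowerSeries.coeff_mul, substQ_coeff]
  -- RHS: ∑_{P ∈ antidiagonal m} σf_{P.1} σg_{P.2}
  have hrhs : ∀ P ∈ Finset.HasAntidiagonal.antidiagonal m,
      PowerSeries.coeff P.1 (substQ p α f) * PowerSeries.coeff P.2 (substQ p α g)
        = ∑ a ∈ range (m+1), ∑ b ∈ range (m+1),
            (PowerSeries.coeff a f * PowerSeries.coeff P.1 ((DD p α)^a)) *
            (PowerSeries.coeff b g * PowerSeries.coeff P.2 ((DD p α)^b)) := by
    intro P hP
    rw [Finset.HasAntidiagonal.mem_antidiagonal] at hP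
    rw [substQ_coeff' p α f (show P.1 < m+1 by omega),
        substQ_coeff' p α g (show P.2 < m+1 by omega), Finset.sum_mul_sum]
  rw [Finset.sum_congr rfl hrhs, Finset.sum_comm]
  have : ∀ a ∈ range (m+1),
      (∑ P ∈ Finset.HasAntidiagonal.antidiagonal m, ∑ b ∈ range (m+1),
        (PowerSeries.coeff a f * PowerSeries.coeff P.1 ((DD p α)^a)) *
        (PowerSeries.coeff b g * PowerSeries.coeff P.2 ((DD p α)^b)))
      = ∑ b ∈ range (m+1), PowerSeries.coeff a f * PowerSeries.coeff b g *
          PowerSeries.coeff m ((DD p α)^(a+b)) := by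
    intro a _
    rw [Finset.sum_comm]
    refine Finset.sum_congr rfl fun b _ => ?_
    rw [pow_add, PowerSeries.coeff_mul, Finset.mul_sum]
    exact Finset.sum_congr rfl fun P _ => by ring
  rw [Finset.sum_congr rfl this]
  -- now LHS
  have hlhs : ∀ n ∈ range (m+1),
      PowerSeries.coeff n (f*g) * PowerSeries.coeff m ((DD p α)^n)
        = ∑ P ∈ Finset.HasAntidiagonal.antidiagonal n,
            PowerSeries.coeff P.1 f * PowerSeries.coeff P.2 g *
              PowerSeries.coeff m ((DD p α)^(P.1+P.2)) := by
    intro n _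
    rw [PowerSeries.coeff_mul, Finset.sum_mul]
    exact Finset.sum_congr rfl fun P hP => by
      rw [Finset.HasAntidiagonal.mem_antidiagonal] at hP; rw [hP]
  rw [Finset.sum_congr rfl hlhs]
  -- biUnion of antidiagonals = pairs with sum ≤ m
  rw [← Finset.sum_biUnion (by
    intro s hs t ht hst
    apply Finset.disjoint_left.mpr
    intro P hPs hPt
    simp only [Finset.mem_coe, Finset.HasAntidiagonal.mem_antidiagonal] at hPs hPt
    exact hst (hPs ▸ hPt))]
  rw [← Finset.sum_product' (s := range (m+1)) (t := range (m+1))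
    (f := fun a b => PowerSeries.coeff a f * PowerSeries.coeff b g *
      PowerSeries.coeff m ((DD p α)^(a+b)))]
  apply Finset.sum_subset
  · intro P hP
    simp only [Finset.mem_biUnion, Finset.mem_range, Finset.HasAntidiagonal.mem_antidiagonal] at hP
    obtain ⟨n, hn, rfl⟩ := hP
    simp only [Finset.mem_product, Finset.mem_range]
    omega
  · intro P hP hPn
    have : m < P.1 + P.2 := by
      by_contra hle
      exact hPn (Finset.mem_biUnion.mpr ⟨P.1+P.2, Finset.mem_range.mpr (by omega),
        Finset.HasAntidiagonal.mem_antidiagonal.mpr rfl⟩)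
    rw [DD_pow_coeff_zero p α this, mul_zero]

lemma substQ_q : substQ p α (qA p) = (qA p) ^ (p ^ (α + 1) + 1) := by
  ext m
  rw [substQ_coeff]
  have hq : ∀ n : ℕ, PowerSeries.coeff n (qA p)
      = (if n = 0 then 1 else 0) + (if n = 1 then 1 else 0) := by
    intro n
    simp [qA, PowerSeries.coeff_one, PowerSeries.coeff_X]
  have : ∀ n ∈ range (m+1), PowerSeries.coeff n (qA p) *
      PowerSeries.coeff m ((DD p α)^n)
      = (if n = 0 then PowerSeries.coeff m (1 : PowerSeries ℤ_[p]) else 0)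
        + (if n = 1 then PowerSeries.coeff m (DD p α) else 0) := by
    intro n _
    rw [hq]
    by_cases h0 : n = 0
    · subst h0; simp
    · by_cases h1 : n = 1
      · subst h1; simp
      · simp [h0, h1]
  rw [Finset.sum_congr rfl this, Finset.sum_add_distrib, Finset.sum_ite_eq',
    Finset.sum_ite_eq']
  by_cases hm : m = 0
  · subst hm
    simp [DD, PowerSeries.coeff_zero_eq_constantCoeff, constantCoeff_qA]
  · have h1m : (1:ℕ) ∈ range (m+1) := by simp; omega
    simp only [Finset.mem_range, Nat.lt_add_one_iff, Nat.zero_le, if_true, h1m, if_pos]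
    rw [DD, map_sub]
    have : PowerSeries.coeff m (1:PowerSeries ℤ_[p]) = 0 := by
      simp [PowerSeries.coeff_one, hm]
    rw [this]
    ring

/-- substQ as a ring hom -/
noncomputable def sQ : PowerSeries ℤ_[p] →+* PowerSeries ℤ_[p] where
  toFun := substQ p α
  map_one' := substQ_one p α
  map_mul' := substQ_mul p α
  map_zero' := substQ_zero p α
  map_add' := substQ_add p α

lemma sQ_apply (f : PowerSeries ℤ_[p]) : sQ p α f = substQ p α f := rfl

lemma substQ_qan_v (N : ℕ) :
    substQ p α (qan ((qA p) ^ p ^ α) N) = qan (((qA p) ^ p ^ α) ^ (p ^ (α+1) + 1)) N := by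
  rw [← sQ_apply, qan, qan, map_sum]
  refine Finset.sum_congr rfl fun i _ => ?_
  rw [← pow_mul, map_pow, sQ_apply, substQ_q, ← pow_mul, ← pow_mul, ← pow_mul]
  congr 1
  ring

lemma substQ_mul_qan_v (x : PowerSeries ℤ_[p]) (N : ℕ) :
    substQ p α (x * qan ((qA p) ^ p ^ α) N)
      = substQ p α x * qan (((qA p) ^ p ^ α) ^ (p ^ (α+1) + 1)) N := by
  rw [← sQ_apply, map_mul, sQ_apply, sQ_apply, substQ_qan_v]

-- nonzero facts
lemma coeff_one_q_pow (N : ℕ) : PowerSeries.coeff 1 ((qA p) ^ N) = N := by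
  induction N with
  | zero => simp
  | succ N ih =>
      rw [pow_succ, PowerSeries.coeff_mul]
      rw [show Finset.HasAntidiagonal.antidiagonal 1 = {(0,1),(1,0)} from rfl]
      rw [Finset.sum_insert (by simp), Finset.sum_singleton]
      have h1 : PowerSeries.constantCoeff ((qA p)^N) = 1 := by
        rw [map_pow, constantCoeff_qA, one_pow]
      have h2 : PowerSeries.coeff 1 (qA p) = 1 := by
        simp [qA, PowerSeries.coeff_one, PowerSeries.coeff_X]
      have h3 : PowerSeries.coeff 0 (qA p) = 1 := by
        simp [qA, PowerSeries.coeff_one, PowerSeries.coeff_X]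
      rw [PowerSeries.coeff_zero_eq_constantCoeff_apply, h1, h2,
        PowerSeries.coeff_zero_eq_constantCoeff_apply, constantCoeff_qA, ih]
      push_cast
      ring

lemma qA_ne_zero : qA p ≠ 0 := by
  intro h
  have := constantCoeff_qA p
  rw [h] at this
  simp at this

lemma βA_ne_zero : βA p α ≠ 0 := by
  intro h
  have : PowerSeries.coeff 1 (βA p α) = p ^ α := by
    rw [βA, map_sub, coeff_one_q_pow]
    simp [PowerSeries.coeff_one]
  rw [h] at this
  simp only [map_zero] at this
  have hp : (p:ℤ_[p]) ^ α ≠ 0 := pow_ne_zero _ (Nat.cast_ne_zero.mpr (Fact.out (p := p.Prime)).pos.ne')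
  exact hp (by exact_mod_cast this.symm)

lemma constantCoeff_qan_u (N : ℕ) :
    PowerSeries.constantCoeff (qan (uA p α) N) = N := by
  rw [qan, map_sum]
  have : ∀ i ∈ range N, PowerSeries.constantCoeff ((uA p α)^i) = 1 := by
    intro i _
    rw [map_pow, uA, map_pow, constantCoeff_qA, one_pow, one_pow]
  rw [Finset.sum_congr rfl this]
  simp

lemma qan_u_ne_zero (N : ℕ) (hN : N ≠ 0) : qan (uA p α) N ≠ 0 := by
  intro h
  have := constantCoeff_qan_u p α N
  rw [h] at this
  simp only [map_zero] at this
  have : (N:ℤ_[p]) = 0 := this.symm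
  exact hN (by exact_mod_cast this)

lemma gamma0_coeff (f : Polynomial (PowerSeries ℤ_[p])) (t : ℕ) :
    (gamma0 p α f).coeff t = substQ p α (f.coeff t) := by
  rw [gamma0, Polynomial.finset_sum_coeff]
  have : ∀ n, (Polynomial.C (substQ p α (f.coeff n)) * Polynomial.X ^ n).coeff t
      = if n = t then substQ p α (f.coeff t) else 0 := by
    intro n
    rw [Polynomial.coeff_C_mul, Polynomial.coeff_X_pow]
    by_cases h : n = t
    · subst h; simp
    · rw [if_neg (fun ht => h ht.symm), mul_zero, if_neg h]
  rw [Finset.sum_congr rfl fun n _ => this n, Finset.sum_ite_eq' f.support t]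
  by_cases ht : t ∈ f.support
  · rw [if_pos ht]
  · rw [if_neg ht, Polynomial.notMem_support_iff.mp ht, substQ_zero]

lemma nabla_coeff (g : Polynomial (PowerSeries ℤ_[p])) (r : ℕ) :
    (nablaA p α g).coeff r = g.coeff (r+1) * (dA p α * qan (uA p α) (r+1)) := by
  rw [nablaA, Polynomial.finset_sum_coeff]
  have : ∀ n, (Polynomial.C (g.coeff n * dA p α * qan (uA p α) n) * Polynomial.X ^ (n-1)).coeff r
      = if n = r+1 then g.coeff (r+1) * (dA p α * qan (uA p α) (r+1)) else 0 := by
    intro n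
    rw [Polynomial.coeff_C_mul, Polynomial.coeff_X_pow]
    by_cases h : n = r + 1
    · subst h; simp [mul_assoc]
    · by_cases h2 : n - 1 = r
      · have hn0 : n = 0 ∧ r = 0 := by omega
        obtain ⟨rfl, rfl⟩ := hn0
        simp [qan_zero]
      · rw [if_neg (fun ht => h2 ht.symm), mul_zero, if_neg h]
  rw [Finset.sum_congr rfl fun n _ => this n, Finset.sum_ite_eq' g.support (r+1)]
  by_cases ht : r+1 ∈ g.support
  · rw [if_pos ht]
  · rw [if_neg ht, Polynomial.notMem_support_iff.mp ht, zero_mul]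

lemma nabla_iter_coeff (j : ℕ) (g : Polynomial (PowerSeries ℤ_[p])) (r : ℕ) :
    ((nablaA p α)^[j] g).coeff r
      = g.coeff (r+j) * ∏ i ∈ range j, (dA p α * qan (uA p α) (r+i+1)) := by
  induction j generalizing r with
  | zero => simp
  | succ j ih =>
      rw [Function.iterate_succ_apply', nabla_coeff, ih, Finset.prod_range_succ']
      have h1 : r + 1 + j = r + (j+1) := by omega
      have h2 : ∀ i, r + 1 + i + 1 = r + (i+1) + 1 := by omega
      rw [h1, Finset.prod_congr rfl fun i _ => by rw [h2 i]]
      ring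

noncomputable def Phi (m j : ℕ) : PowerSeries ℤ_[p] :=
  ∏ i ∈ range j, (dA p α * qan (uA p α) (m - i))

lemma Xpow_nabla_coeff {j : ℕ} (hj : 1 ≤ j) (h : Polynomial (PowerSeries ℤ_[p])) (r : ℕ) :
    (Polynomial.X ^ (j-1) * (nablaA p α)^[j-1] (nablaA p α h)).coeff r
      = h.coeff (r+1) * Phi p α (r+1) j := by
  rw [← Function.iterate_succ_apply, Nat.succ_eq_add_one,
    show j - 1 + 1 = j from by omega, Polynomial.coeff_X_pow_mul']
  by_cases hle : j - 1 ≤ r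
  · rw [if_pos hle, nabla_iter_coeff, show r - (j-1) + j = r + 1 from by omega]
    congr 1
    rw [Phi, ← Finset.prod_range_reflect]
    refine Finset.prod_congr rfl fun i hi => ?_
    rw [Finset.mem_range] at hi
    congr 2
    omega
  · rw [if_neg hle, Phi]
    rw [Finset.prod_eq_zero (i := r+1) (Finset.mem_range.mpr (by omega))]
    · ring
    · rw [Nat.sub_self, qan_zero, mul_zero]

lemma v_pow_p : ((qA p) ^ p ^ α) ^ p = uA p α := by
  rw [← pow_mul, uA, ← pow_succ]

lemma beta_eq : βA p α = (qA p) ^ p ^ α - 1 := rfl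

lemma beta_mul_d_qan (n : ℕ) :
    βA p α * (dA p α * qan (uA p α) n) = (uA p α) ^ n - 1 := by
  rw [← mul_assoc, beta_eq, dA, sub_one_mul_qan, v_pow_p, sub_one_mul_qan]

lemma two_le_kk : 2 ≤ p ^ (α + 1) + 1 := by
  have hp : 2 ≤ p := (Fact.out (p := p.Prime)).two_le
  have : 2 ≤ p ^ (α + 1) := le_trans hp (Nat.le_self_pow (by omega) p)
  omega

lemma key_identity (m : ℕ) :
    qan (uA p α) (p ^ (α+1) + 1) * Phi p α m 1
      + βA p α * qA p *
        ∑ j ∈ Finset.Icc 2 (p ^ (α+1) + 1),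
          (aaA p α (p ^ (α+1) + 1) j * (qA p) ^ (j * (j-1) / 2 * p ^ (α+1) - 1)
            * (βA p α) ^ (j-2)) * Phi p α m j
      = qan ((qA p) ^ p ^ α) (p ^ (α+1) + 1)
        * qan (((qA p) ^ p ^ α) ^ (p ^ (α+1) + 1)) (p * m) := by
  set kk := p ^ (α+1) + 1 with hkk
  apply mul_left_cancel₀ (βA_ne_zero p α)
  have hterm : ∀ j ∈ Finset.Icc 2 kk,
      βA p α * ((βA p α * qA p) *
        ((aaA p α kk j * (qA p) ^ (j * (j-1) / 2 * p ^ (α+1) - 1) * (βA p α) ^ (j-2))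
          * Phi p α m j))
      = aaA p α kk j * (uA p α) ^ (j.choose 2) * PP p α m j := by
    intro j hj
    rw [Finset.mem_Icc] at hj
    have hjj : 1 ≤ j * (j-1) / 2 := by
      rw [Nat.le_div_iff_mul_le (by norm_num)]
      have : 2 ≤ j * (j - 1) := by
        calc 2 = 2 * 1 := by norm_num
        _ ≤ j * (j-1) := Nat.mul_le_mul (by omega) (by omega)
      omega
    have hpp : 1 ≤ p ^ (α + 1) := Nat.one_le_pow _ _ (Fact.out (p := p.Prime)).pos
    have hexp : j * (j-1) / 2 * p ^ (α+1) - 1 + 1 = j.choose 2 * p ^ (α+1) := by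
      rw [Nat.choose_two_right]
      have : 1 ≤ j * (j-1) / 2 * p ^ (α+1) := Nat.one_le_iff_ne_zero.mpr (by positivity)
      omega
    have hq : qA p * (qA p) ^ (j * (j-1) / 2 * p ^ (α+1) - 1) = (uA p α) ^ (j.choose 2) := by
      rw [← pow_succ', hexp, uA, ← pow_mul, mul_comm (j.choose 2)]
    have hB : βA p α * βA p α * (βA p α) ^ (j-2) = (βA p α) ^ j := by
      rw [← pow_two, ← pow_add]
      congr 1
      omega
    have hBP : (βA p α) ^ j * Phi p α m j = PP p α m j := by
      rw [Phi, PP, ← Finset.card_range j, ← Finset.prod_const, Finset.card_range,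
        ← Finset.prod_mul_distrib]
      exact Finset.prod_congr rfl fun i _ => beta_mul_d_qan p α (m - i)
    calc βA p α * ((βA p α * qA p) *
          ((aaA p α kk j * (qA p) ^ (j * (j-1) / 2 * p ^ (α+1) - 1) * (βA p α) ^ (j-2))
            * Phi p α m j))
        = aaA p α kk j * (qA p * (qA p) ^ (j * (j-1) / 2 * p ^ (α+1) - 1))
            * ((βA p α * βA p α * (βA p α) ^ (j-2)) * Phi p α m j) := by ring
      _ = aaA p α kk j * (uA p α) ^ (j.choose 2) * PP p α m j := by
          rw [hq, hB, hBP]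
  have h1 : βA p α * (qan (uA p α) kk * Phi p α m 1)
      = aaA p α kk 1 * (uA p α) ^ ((1:ℕ).choose 2) * PP p α m 1 := by
    rw [Phi, Finset.prod_range_one, Nat.sub_zero, aa_one]
    rw [show (1:ℕ).choose 2 = 0 from rfl, pow_zero, mul_one]
    rw [PP, Finset.prod_range_one, Nat.sub_zero]
    rw [show βA p α * (qan (uA p α) kk * (dA p α * qan (uA p α) m))
      = qan (uA p α) kk * (βA p α * (dA p α * qan (uA p α) m)) from by ring, beta_mul_d_qan]
  -- LHS equals the Gauss sum minus the j=0 term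
  have hsplit : (aaA p α kk 1 * (uA p α) ^ ((1:ℕ).choose 2) * PP p α m 1)
      + ∑ j ∈ Finset.Icc 2 kk, aaA p α kk j * (uA p α) ^ (j.choose 2) * PP p α m j
      = (∑ j ∈ range (kk+1), aaA p α kk j * (uA p α) ^ (j.choose 2) * PP p α m j) - 1 := by
    have e1 : range (kk+1) = insert 0 (insert 1 (Finset.Icc 2 kk)) := by
      ext j
      simp only [Finset.mem_range, Finset.mem_insert, Finset.mem_Icc]
      omega
    rw [e1, Finset.sum_insert (by simp), Finset.sum_insert (by
      simp only [Finset.mem_Icc]; omega)]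
    rw [aa_zero_right, PP_zero, show Nat.choose 0 2 = 0 from rfl, pow_zero]
    ring
  calc βA p α * (qan (uA p α) kk * Phi p α m 1
        + βA p α * qA p * ∑ j ∈ Finset.Icc 2 kk,
          (aaA p α kk j * (qA p) ^ (j * (j-1) / 2 * p ^ (α+1) - 1) * (βA p α) ^ (j-2))
            * Phi p α m j)
      = βA p α * (qan (uA p α) kk * Phi p α m 1)
        + ∑ j ∈ Finset.Icc 2 kk, βA p α * ((βA p α * qA p) *
            ((aaA p α kk j * (qA p) ^ (j * (j-1) / 2 * p ^ (α+1) - 1) * (βA p α) ^ (j-2))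
              * Phi p α m j)) := by
        rw [mul_add, Finset.mul_sum, Finset.mul_sum]
    _ = (aaA p α kk 1 * (uA p α) ^ ((1:ℕ).choose 2) * PP p α m 1)
        + ∑ j ∈ Finset.Icc 2 kk, aaA p α kk j * (uA p α) ^ (j.choose 2) * PP p α m j := by
        rw [h1, Finset.sum_congr rfl hterm]
    _ = (uA p α) ^ (kk * m) - 1 := by rw [hsplit, gauss_sum]
    _ = βA p α * (qan ((qA p) ^ p ^ α) kk * qan (((qA p) ^ p ^ α) ^ kk) (p * m)) := by
        rw [← mul_assoc, beta_eq, sub_one_mul_qan, sub_one_mul_qan, ← pow_mul, ← pow_mul,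
          uA, ← pow_mul]
        congr 2
        ring

/-- With `k := p^{α+1}+1`, `∂` the unique `ℤ_p`-linear map on
`B = A[T]` with `q·β·∂ = γ₀ − Id`, `s₀ := [k]_{q^{p^α}}·([k]_u)^{−1}` (a unit of `A`),
`s₁` the unique element with `q·β·[k]_{q^{p^α}}·s₁ = [k]_{q^{p^α}} − [k]_u`, and
`𝒟 := ([k]_u)^{−1}·∑_{j=2}^{k} a_{k,j}·q^{j(j−1)p^{α+1}/2 − 1}·β^{j−2}·T^{j−1}·∇^{j−1}`,
one has the commutation relation
`(Id + β·q·𝒟) ∘ ∇ ∘ ∂ = s₀·(∂ ∘ ∇) − 𝒟 ∘ ∇ + s₀·s₁·∇` of `ℤ_p`-linear endomorphisms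
of `B`. -/
theorem stmt19
    (par : Polynomial (PowerSeries ℤ_[p]) → Polynomial (PowerSeries ℤ_[p]))
    (hpar : ∀ f, Polynomial.C (qA p * βA p α) * par f = gamma0 p α f - f)
    (s₀ s₁ : PowerSeries ℤ_[p])
    (hs₀ : s₀ * qan (uA p α) (p ^ (α + 1) + 1) = qan ((qA p) ^ p ^ α) (p ^ (α + 1) + 1))
    (hs₁ : qA p * βA p α * qan ((qA p) ^ p ^ α) (p ^ (α + 1) + 1) * s₁ =
      qan ((qA p) ^ p ^ α) (p ^ (α + 1) + 1) - qan (uA p α) (p ^ (α + 1) + 1))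
    (𝒟 : Polynomial (PowerSeries ℤ_[p]) → Polynomial (PowerSeries ℤ_[p]))
    (h𝒟 : ∀ f, Polynomial.C (qan (uA p α) (p ^ (α + 1) + 1)) * 𝒟 f =
      ∑ j ∈ Finset.Icc 2 (p ^ (α + 1) + 1),
        Polynomial.C (aaA p α (p ^ (α + 1) + 1) j *
            (qA p) ^ (j * (j - 1) / 2 * p ^ (α + 1) - 1) * (βA p α) ^ (j - 2)) *
          Polynomial.X ^ (j - 1) * (nablaA p α)^[j - 1] f) :
    ∀ f : Polynomial (PowerSeries ℤ_[p]),
      nablaA p α (par f) + Polynomial.C (βA p α * qA p) * 𝒟 (nablaA p α (par f)) =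
        Polynomial.C s₀ * par (nablaA p α f) - 𝒟 (nablaA p α f) +
          Polynomial.C (s₀ * s₁) * nablaA p α f := by
  intro f
  have hCne : (qA p * βA p α * qan (uA p α) (p ^ (α + 1) + 1)) ≠ 0 :=
    mul_ne_zero (mul_ne_zero (qA_ne_zero p) (βA_ne_zero p α))
      (qan_u_ne_zero p α _ (by positivity))
  apply mul_left_cancel₀ (a := Polynomial.C (qA p * βA p α * qan (uA p α) (p ^ (α + 1) + 1)))
    (by rwa [Ne, Polynomial.C_eq_zero])
  refine Polynomial.ext fun r => ?_
  have hD' : ∀ g : Polynomial (PowerSeries ℤ_[p]),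
      qan (uA p α) (p ^ (α + 1) + 1) * (𝒟 g).coeff r
        = ∑ j ∈ Finset.Icc 2 (p ^ (α + 1) + 1),
            (aaA p α (p ^ (α + 1) + 1) j *
              (qA p) ^ (j * (j - 1) / 2 * p ^ (α + 1) - 1) * (βA p α) ^ (j - 2))
            * (Polynomial.X ^ (j - 1) * (nablaA p α)^[j - 1] g).coeff r := by
    intro g
    have h := congrArg (fun P : Polynomial (PowerSeries ℤ_[p]) => P.coeff r) (h𝒟 g)
    simpa only [mul_assoc, Polynomial.coeff_C_mul, Polynomial.finset_sum_coeff] using h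
  have hDx : qan (uA p α) (p ^ (α + 1) + 1) * (𝒟 (nablaA p α (par f))).coeff r
      = (par f).coeff (r + 1) *
          ∑ j ∈ Finset.Icc 2 (p ^ (α + 1) + 1),
            (aaA p α (p ^ (α + 1) + 1) j *
              (qA p) ^ (j * (j - 1) / 2 * p ^ (α + 1) - 1) * (βA p α) ^ (j - 2))
            * Phi p α (r + 1) j := by
    rw [hD' (nablaA p α (par f)), Finset.mul_sum]
    refine Finset.sum_congr rfl fun j hj => ?_
    rw [Finset.mem_Icc] at hj
    rw [Xpow_nabla_coeff p α (by omega) (par f) r]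
    ring
  have hDa : qan (uA p α) (p ^ (α + 1) + 1) * (𝒟 (nablaA p α f)).coeff r
      = f.coeff (r + 1) *
          ∑ j ∈ Finset.Icc 2 (p ^ (α + 1) + 1),
            (aaA p α (p ^ (α + 1) + 1) j *
              (qA p) ^ (j * (j - 1) / 2 * p ^ (α + 1) - 1) * (βA p α) ^ (j - 2))
            * Phi p α (r + 1) j := by
    rw [hD' (nablaA p α f), Finset.mul_sum]
    refine Finset.sum_congr rfl fun j hj => ?_
    rw [Finset.mem_Icc] at hj
    rw [Xpow_nabla_coeff p α (by omega) f r]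
    ring
  have hx : qA p * βA p α * (par f).coeff (r + 1)
      = substQ p α (f.coeff (r + 1)) - f.coeff (r + 1) := by
    have h := congrArg (fun P : Polynomial (PowerSeries ℤ_[p]) => P.coeff (r + 1)) (hpar f)
    simpa only [Polynomial.coeff_C_mul, Polynomial.coeff_sub, gamma0_coeff] using h
  have hdq : dA p α * qan (uA p α) (r + 1) = qan ((qA p) ^ p ^ α) (p * (r + 1)) := by
    rw [qan_mul, v_pow_p, dA]
  have hy : qA p * βA p α * (par (nablaA p α f)).coeff r
      = substQ p α (f.coeff (r + 1)) *
          qan (((qA p) ^ p ^ α) ^ (p ^ (α + 1) + 1)) (p * (r + 1))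
        - f.coeff (r + 1) * (dA p α * qan (uA p α) (r + 1)) := by
    have h := congrArg (fun P : Polynomial (PowerSeries ℤ_[p]) => P.coeff r)
      (hpar (nablaA p α f))
    simp only [Polynomial.coeff_C_mul, Polynomial.coeff_sub, gamma0_coeff] at h
    rw [nabla_coeff] at h
    rw [h, hdq, substQ_mul_qan_v, ← hdq]
  have hkey := key_identity p α (r + 1)
  rw [show Phi p α (r + 1) 1 = dA p α * qan (uA p α) (r + 1) from by
    rw [Phi, Finset.prod_range_one, Nat.sub_zero]] at hkey
  simp only [Polynomial.coeff_C_mul, Polynomial.coeff_add, Polynomial.coeff_sub]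
  rw [nabla_coeff p α (par f) r, nabla_coeff p α f r]
  linear_combination
    (qan (uA p α) (p ^ (α + 1) + 1) * (dA p α * qan (uA p α) (r + 1))) * hx
    + (qA p * βA p α * βA p α * qA p) * hDx
    + (βA p α * qA p *
        (∑ j ∈ Finset.Icc 2 (p ^ (α + 1) + 1),
          (aaA p α (p ^ (α + 1) + 1) j *
            (qA p) ^ (j * (j - 1) / 2 * p ^ (α + 1) - 1) * (βA p α) ^ (j - 2))
          * Phi p α (r + 1) j)) * hx
    + (qA p * βA p α) * hDa
    - (qA p * βA p α * (par (nablaA p α f)).coeff r) * hs₀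
    - (qan ((qA p) ^ p ^ α) (p ^ (α + 1) + 1)) * hy
    - (qA p * βA p α * s₁ * (f.coeff (r + 1) * (dA p α * qan (uA p α) (r + 1)))) * hs₀
    - (f.coeff (r + 1) * (dA p α * qan (uA p α) (r + 1))) * hs₁
    + (substQ p α (f.coeff (r + 1))) * hkey
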